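/- The family of bounded Parikh semilinear languages is contained in the family of bounded Ginsburg semilinear languages. Concretely: for any words w_1,...,w_k ∈ Σ⁺ and semilinear set Q₂ ⊆ ℕⁿ (n = |Σ|), the language L = { w_1^{i_1} ⋯ w_k^{i_k} | i_1,...,i_k ∈ ℕ, ψ(w_1^{i_1}⋯w_k^{i_k}) ∈ Q₂ } equals φ(Q₁) for some semilinear set Q₁ ⊆ ℕᵏ, where φ(i_1,...,i_k) = w_1^{i_1}⋯w_k^{i_k}. -/

import Mathlib

/-- A linear subset of ℕᵏ. -/
def IsLinear {k : ℕ} (Q : Set (Fin k → ℕ)) : Prop :=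
  ∃ (r : ℕ) (v₀ : Fin k → ℕ) (v : Fin r → Fin k → ℕ),
    Q = {x | ∃ c : Fin r → ℕ, x = v₀ + ∑ j, c j • v j}

/-- A semilinear subset of ℕᵏ: a finite union of linear sets. -/
def IsSemilinear {k : ℕ} (Q : Set (Fin k → ℕ)) : Prop :=
  ∃ (t : ℕ) (f : Fin t → Set (Fin k → ℕ)), (∀ i, IsLinear (f i)) ∧ Q = ⋃ i, f i

/-- The word wⁱ (i-fold concatenation of w). -/
def wordPow {α : Type*} (w : List α) (i : ℕ) : List α := (List.replicate i w).flatten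

/-- φ(i₁,...,i_k) = w₁^{i₁} ⋯ w_k^{i_k}. -/
def phiW {α : Type*} {k : ℕ} (w : Fin k → List α) (i : Fin k → ℕ) : List α :=
  (List.finRange k).flatMap fun j => wordPow (w j) (i j)

/-- The Parikh map ψ over the alphabet Fin n. -/
def parikh {n : ℕ} (w : List (Fin n)) : Fin n → ℕ := fun a => w.count a

section Aux

variable {d n k : ℕ}

/-- Every element of a set in ℕᵈ has a minimal element of the set below it. -/
lemma exists_minimal_le (S : Set (Fin d → ℕ)) {z : Fin d → ℕ} (hz : z ∈ S) :
    ∃ m ∈ S, m ≤ z ∧ ∀ y ∈ S, y ≤ m → y = m := by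
  suffices h : ∀ N (z : Fin d → ℕ), z ∈ S → (∑ j, z j) ≤ N →
      ∃ m ∈ S, m ≤ z ∧ ∀ y ∈ S, y ≤ m → y = m from h _ z hz le_rfl
  intro N
  induction N with
  | zero =>
    intro z hz hN
    refine ⟨z, hz, le_rfl, fun y hy hyz => ?_⟩
    funext j
    have h1 : z j ≤ 0 :=
      (Finset.single_le_sum (fun i _ => Nat.zero_le (z i)) (Finset.mem_univ j)).trans hN
    have h2 : y j ≤ z j := hyz j
    omega
  | succ N ih =>
    intro z hz hN
    by_cases hmin : ∀ y ∈ S, y ≤ z → y = z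
    · exact ⟨z, hz, le_rfl, hmin⟩
    · push_neg at hmin
      obtain ⟨y, hyS, hyz, hne⟩ := hmin
      have hlt : ∑ j, y j < ∑ j, z j := by
        refine Finset.sum_lt_sum (fun j _ => hyz j) ?_
        obtain ⟨j, hj⟩ := Function.ne_iff.mp hne
        exact ⟨j, Finset.mem_univ j, lt_of_le_of_ne (hyz j) hj⟩
      obtain ⟨m, hmS, hmy, hmmin⟩ := ih y hyS (by omega)
      exact ⟨m, hmS, hmy.trans hyz, hmmin⟩

/-- Dickson: the set of minimal elements of any set in ℕᵈ is finite. -/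
lemma minimals_finite (S : Set (Fin d → ℕ)) :
    {m | m ∈ S ∧ ∀ y ∈ S, y ≤ m → y = m}.Finite := by
  have hpwo : ({m | m ∈ S ∧ ∀ y ∈ S, y ≤ m → y = m} : Set (Fin d → ℕ)).IsPWO :=
    Set.isPWO_of_wellQuasiOrderedLE _
  refine IsAntichain.finite_of_partiallyWellOrderedOn ?_ hpwo
  intro a ha b hb hab hle
  exact hab (hb.2 a ha.1 hle)

variable (F H : (Fin d → ℕ) → (Fin n → ℕ))
variable (hF : ∀ a b, F (a + b) = F a + F b) (hF0 : F 0 = 0)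
variable (hH : ∀ a b, H (a + b) = H a + H b) (hH0 : H 0 = 0)

include hF hF0 hH hH0 in
lemma additive_eq_smul {v : Fin d → ℕ} (hv : F v = H v) (c : ℕ) : F (c • v) = H (c • v) := by
  induction c with
  | zero => simp [hF0, hH0]
  | succ c ih => rw [succ_nsmul, hF, hH, ih, hv]

include hF hF0 hH hH0 in
lemma additive_eq_sum {r : ℕ} (x : Fin r → Fin d → ℕ) (hx : ∀ j, F (x j) = H (x j)) :
    F (∑ j, x j) = H (∑ j, x j) := by
  classical
  have key : ∀ s : Finset (Fin r), F (∑ j ∈ s, x j) = H (∑ j ∈ s, x j) := by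
    intro s
    induction s using Finset.induction_on with
    | empty => simp [hF0, hH0]
    | insert a s hni ih => rw [Finset.sum_insert hni, hF, hH, ih, hx]
  exact key Finset.univ

include hF hH in
/-- Splitting off a smaller solution: if `m ≤ z`, `F z = b + H z`, `F m = b + H m`,
then `z - m` solves the homogeneous system. -/
lemma sub_solves {b : Fin n → ℕ} {z m : Fin d → ℕ} (hmz : m ≤ z)
    (hz : F z = b + H z) (hm : F m = b + H m) :
    F (z - m) = H (z - m) := by
  have hzeq : z = m + (z - m) := funext fun j => (Nat.add_sub_cancel' (hmz j)).symm
  have h1 : F m + F (z - m) = b + (H m + H (z - m)) := by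
    rw [← hF, ← hH, ← hzeq]; exact hz
  have h2 : F m + F (z - m) = F m + H (z - m) := by
    rw [h1, hm]; ring
  exact add_left_cancel h2

include hF hF0 hH hH0 in
/-- Every solution of the homogeneous system F z = H z is an ℕ-combination of the
minimal nonzero solutions. -/
lemma hom_decomp {r : ℕ} {g : Fin r → Fin d → ℕ}
    (hg : Set.range g = {m | m ∈ {y | F y = H y ∧ y ≠ 0} ∧
      ∀ y ∈ {y | F y = H y ∧ y ≠ 0}, y ≤ m → y = m}) :
    ∀ z, F z = H z → ∃ c : Fin r → ℕ, z = ∑ j, c j • g j := by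
  suffices h : ∀ N z, F z = H z → (∑ j, z j) ≤ N → ∃ c : Fin r → ℕ, z = ∑ j, c j • g j from
    fun z hz => h _ z hz le_rfl
  intro N
  induction N with
  | zero =>
    intro z hz hN
    refine ⟨0, ?_⟩
    have hz0 : z = 0 := funext fun j => Nat.le_zero.mp
      ((Finset.single_le_sum (fun i _ => Nat.zero_le (z i)) (Finset.mem_univ j)).trans hN)
    simp [hz0]
  | succ N ih =>
    intro z hz hN
    by_cases hz0 : z = 0
    · exact ⟨0, by simp [hz0]⟩
    · obtain ⟨m, hmS, hmz, hmmin⟩ :=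
        exists_minimal_le {y | F y = H y ∧ y ≠ 0} (z := z) ⟨hz, hz0⟩
      have hmem : m ∈ Set.range g := by rw [hg]; exact ⟨hmS, hmmin⟩
      obtain ⟨j₀, hj₀⟩ := hmem
      have hzeq : z = m + (z - m) := funext fun j => (Nat.add_sub_cancel' (hmz j)).symm
      have hFz' : F (z - m) = H (z - m) := by
        refine sub_solves F H hF hH (b := 0) hmz ?_ ?_
        · rw [zero_add]; exact hz
        · rw [zero_add]; exact hmS.1
      have hsum : ∑ j, (z - m) j ≤ N := by
        have he : ∑ j, z j = ∑ j, m j + ∑ j, (z - m) j := by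
          rw [← Finset.sum_add_distrib]
          exact Finset.sum_congr rfl fun j _ => congrFun hzeq j
        have hmpos : 0 < ∑ j, m j := by
          obtain ⟨j, hj⟩ := Function.ne_iff.mp hmS.2
          refine Finset.sum_pos' (fun i _ => Nat.zero_le _) ⟨j, Finset.mem_univ j, ?_⟩
          exact Nat.pos_of_ne_zero (by simpa using hj)
        omega
      obtain ⟨c', hc'⟩ := ih (z - m) hFz' hsum
      classical
      set c'' : Fin r → ℕ := c' + Pi.single j₀ 1 with hc''def
      refine ⟨c'', ?_⟩
      have hsplit : ∑ j, c'' j • g j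
          = ∑ j, c' j • g j + ∑ j, (Pi.single j₀ 1 : Fin r → ℕ) j • g j := by
        rw [hc''def]
        rw [← Finset.sum_add_distrib]
        exact Finset.sum_congr rfl fun j _ => by simp [add_smul]
      have hsingle : ∑ j, (Pi.single j₀ 1 : Fin r → ℕ) j • g j = g j₀ := by
        rw [Finset.sum_eq_single j₀]
        · simp
        · intro j _ hj; simp [Pi.single_eq_of_ne hj]
        · simp
      rw [hsplit, hsingle, ← hc', hj₀, add_comm]
      exact hzeq

include hF hF0 hH hH0 in
/-- The solution set of `F z = b + H z` is a finite union of shifted copies of the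
finitely generated homogeneous solution monoid. -/
lemma semilinear_solution (b : Fin n → ℕ) :
    ∃ (t r : ℕ) (m : Fin t → Fin d → ℕ) (g : Fin r → Fin d → ℕ),
      (∀ j, F (g j) = H (g j)) ∧
      {z | F z = b + H z} =
        {z | ∃ (s : Fin t) (c : Fin r → ℕ), z = m s + ∑ j, c j • g j} := by
  classical
  obtain ⟨t, m, _, hm⟩ := (minimals_finite {z | F z = b + H z}).fin_param
  obtain ⟨r, g, _, hgr⟩ := (minimals_finite {y | F y = H y ∧ y ≠ 0}).fin_param
  have hgS : ∀ j, F (g j) = H (g j) := by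
    intro j
    have : g j ∈ Set.range g := ⟨j, rfl⟩
    rw [hgr] at this
    exact this.1.1
  refine ⟨t, r, m, g, hgS, ?_⟩
  ext z
  simp only [Set.mem_setOf_eq]
  constructor
  · intro hz
    obtain ⟨m₀, hm₀S, hm₀z, hm₀min⟩ := exists_minimal_le {z | F z = b + H z} hz
    have hmem : m₀ ∈ Set.range m := by rw [hm]; exact ⟨hm₀S, hm₀min⟩
    obtain ⟨s, hs⟩ := hmem
    have hFz' : F (z - m₀) = H (z - m₀) := sub_solves F H hF hH hm₀z hz hm₀S
    obtain ⟨c, hc⟩ := hom_decomp F H hF hF0 hH hH0 hgr (z - m₀) hFz'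
    refine ⟨s, c, ?_⟩
    rw [hs, ← hc]
    exact funext fun j => (Nat.add_sub_cancel' (hm₀z j)).symm
  · rintro ⟨s, c, rfl⟩
    have hms : F (m s) = b + H (m s) := by
      have : m s ∈ Set.range m := ⟨s, rfl⟩
      rw [hm] at this
      exact this.1
    have hsum : F (∑ j, c j • g j) = H (∑ j, c j • g j) :=
      additive_eq_sum F H hF hF0 hH hH0 _ fun j =>
        additive_eq_smul F H hF hF0 hH hH0 (hgS j) (c j)
    rw [hF, hH, hms, hsum, add_assoc]

end Aux

section Preimage

variable {n k : ℕ}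

/-- The preimage of a linear set under an ℕ-linear map is semilinear. -/
lemma preimage_linear_semilinear (p : Fin k → Fin n → ℕ) (L : Set (Fin n → ℕ))
    (hL : IsLinear L) : IsSemilinear {i : Fin k → ℕ | (∑ j, i j • p j) ∈ L} := by
  classical
  obtain ⟨r, v₀, u, rfl⟩ := hL
  set F : (Fin (k + r) → ℕ) → (Fin n → ℕ) :=
    fun z => ∑ j : Fin k, z (Fin.castAdd r j) • p j with hFdef
  set H : (Fin (k + r) → ℕ) → (Fin n → ℕ) :=
    fun z => ∑ j : Fin r, z (Fin.natAdd k j) • u j with hHdef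
  have hF : ∀ a b, F (a + b) = F a + F b := by
    intro a b
    simp only [hFdef, Pi.add_apply, add_smul, Finset.sum_add_distrib]
  have hH : ∀ a b, H (a + b) = H a + H b := by
    intro a b
    simp only [hHdef, Pi.add_apply, add_smul, Finset.sum_add_distrib]
  have hF0 : F 0 = 0 := by
    funext a; simp [hFdef, Finset.sum_apply]
  have hH0 : H 0 = 0 := by
    funext a; simp [hHdef, Finset.sum_apply]
  obtain ⟨t, r', m, g, hgS, hset⟩ := semilinear_solution F H hF hF0 hH hH0 v₀
  refine ⟨t, fun s => {i | ∃ c : Fin r' → ℕ,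
      i = (fun q => m s (Fin.castAdd r q)) + ∑ j, c j • (fun q => g j (Fin.castAdd r q))},
      fun s => ⟨r', _, _, rfl⟩, ?_⟩
  ext i
  simp only [Set.mem_setOf_eq, Set.mem_iUnion]
  constructor
  · rintro ⟨c, hc⟩
    have hz : Fin.append i c ∈ {z | F z = v₀ + H z} := by
      show F (Fin.append i c) = v₀ + H (Fin.append i c)
      have h1 : F (Fin.append i c) = ∑ j, i j • p j := by
        simp only [hFdef, Fin.append_left]
      have h2 : H (Fin.append i c) = ∑ j, c j • u j := by
        simp only [hHdef, Fin.append_right]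
      rw [h1, h2]; exact hc
    rw [hset] at hz
    obtain ⟨s, c', hzeq⟩ := hz
    refine ⟨s, c', ?_⟩
    funext q
    have := congrFun hzeq (Fin.castAdd r q)
    rw [Fin.append_left] at this
    rw [this]
    simp [Finset.sum_apply]
  · rintro ⟨s, c, hi⟩
    set z : Fin (k + r) → ℕ := m s + ∑ j, c j • g j with hzdef
    have hzS : z ∈ {z | F z = v₀ + H z} := by rw [hset]; exact ⟨s, c, rfl⟩
    have hiz : ∀ q, i q = z (Fin.castAdd r q) := by
      intro q
      rw [congrFun hi q]
      simp [hzdef, Finset.sum_apply]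
    refine ⟨fun j => z (Fin.natAdd k j), ?_⟩
    have hFz : (∑ j, i j • p j) = F z := by
      simp only [hFdef]
      exact Finset.sum_congr rfl fun j _ => by rw [hiz j]
    rw [hFz]
    exact hzS

/-- Binary unions of semilinear sets are semilinear. -/
lemma IsSemilinear.union {A B : Set (Fin k → ℕ)} (hA : IsSemilinear A) (hB : IsSemilinear B) :
    IsSemilinear (A ∪ B) := by
  obtain ⟨t₁, f₁, hf₁, rfl⟩ := hA
  obtain ⟨t₂, f₂, hf₂, rfl⟩ := hB
  refine ⟨t₁ + t₂, Fin.append f₁ f₂, ?_, ?_⟩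
  · refine Fin.addCases ?_ ?_
    · intro i; rw [Fin.append_left]; exact hf₁ i
    · intro i; rw [Fin.append_right]; exact hf₂ i
  · ext x
    simp only [Set.mem_iUnion, Set.mem_union]
    constructor
    · rintro (⟨i, hi⟩ | ⟨i, hi⟩)
      · exact ⟨Fin.castAdd t₂ i, by rwa [Fin.append_left]⟩
      · exact ⟨Fin.natAdd t₁ i, by rwa [Fin.append_right]⟩
    · rintro ⟨i, hi⟩
      obtain ⟨s, rfl⟩ := finSumFinEquiv.surjective i
      cases s with
      | inl i =>
        rw [finSumFinEquiv_apply_left, Fin.append_left] at hi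
        exact Or.inl ⟨i, hi⟩
      | inr i =>
        rw [finSumFinEquiv_apply_right, Fin.append_right] at hi
        exact Or.inr ⟨i, hi⟩

lemma IsSemilinear.iUnion {t : ℕ} (A : Fin t → Set (Fin k → ℕ))
    (h : ∀ i, IsSemilinear (A i)) : IsSemilinear (⋃ i, A i) := by
  induction t with
  | zero =>
    refine ⟨0, Fin.elim0, fun i => i.elim0, ?_⟩
    ext x
    simp only [Set.mem_iUnion]
    exact ⟨fun ⟨i, _⟩ => i.elim0, fun ⟨i, _⟩ => i.elim0⟩
  | succ t ih =>
    have hsplit : (⋃ i, A i) = (⋃ i : Fin t, A i.castSucc) ∪ A (Fin.last t) := by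
      ext x
      simp only [Set.mem_iUnion, Set.mem_union]
      constructor
      · rintro ⟨i, hi⟩
        rcases Fin.eq_castSucc_or_eq_last i with ⟨j, rfl⟩ | rfl
        · exact Or.inl ⟨j, hi⟩
        · exact Or.inr hi
      · rintro (⟨i, hi⟩ | hi)
        · exact ⟨i.castSucc, hi⟩
        · exact ⟨Fin.last t, hi⟩
    rw [hsplit]
    exact (ih _ fun i => h i.castSucc).union (h (Fin.last t))

end Preimage

section Parikh

variable {n k : ℕ}

lemma parikh_nil : parikh ([] : List (Fin n)) = 0 := by
  funext a; simp [parikh]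

lemma parikh_append (u v : List (Fin n)) : parikh (u ++ v) = parikh u + parikh v := by
  funext a; simp [parikh, List.count_append]

lemma parikh_wordPow (u : List (Fin n)) (i : ℕ) : parikh (wordPow u i) = i • parikh u := by
  induction i with
  | zero => simp [wordPow, parikh_nil]
  | succ i ih =>
    have : wordPow u (i + 1) = u ++ wordPow u i := by
      simp [wordPow, List.replicate_succ]
    rw [this, parikh_append, ih, succ_nsmul, add_comm]

lemma parikh_flatMap (l : List (Fin k)) (f : Fin k → List (Fin n)) :
    parikh (l.flatMap f) = (l.map fun j => parikh (f j)).sum := by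
  induction l with
  | nil => simp [parikh_nil]
  | cons a l ih => simp [List.flatMap_cons, parikh_append, ih]

lemma parikh_phiW (w : Fin k → List (Fin n)) (i : Fin k → ℕ) :
    parikh (phiW w i) = ∑ j, i j • parikh (w j) := by
  rw [phiW, parikh_flatMap, Fin.sum_univ_def]
  congr 1
  exact List.map_congr_left fun j _ => parikh_wordPow (w j) (i j)

end Parikh

theorem stmt4 {n k : ℕ} (w : Fin k → List (Fin n)) (hw : ∀ j, w j ≠ [])
    (Q₂ : Set (Fin n → ℕ)) (hQ₂ : IsSemilinear Q₂) :
    ∃ Q₁ : Set (Fin k → ℕ), IsSemilinear Q₁ ∧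
      {x | ∃ i : Fin k → ℕ, x = phiW w i ∧ parikh (phiW w i) ∈ Q₂} = phiW w '' Q₁ := by
  classical
  obtain ⟨T, f, hf, rfl⟩ := hQ₂
  refine ⟨{i | parikh (phiW w i) ∈ ⋃ e, f e}, ?_, ?_⟩
  · have heq : {i : Fin k → ℕ | parikh (phiW w i) ∈ ⋃ e, f e}
        = ⋃ e, {i : Fin k → ℕ | (∑ j, i j • parikh (w j)) ∈ f e} := by
      ext i
      simp only [Set.mem_setOf_eq, Set.mem_iUnion, parikh_phiW]
    rw [heq]
    exact IsSemilinear.iUnion _ fun e => preimage_linear_semilinear _ (f e) (hf e)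
  · ext x
    constructor
    · rintro ⟨i, rfl, hi⟩
      exact ⟨i, hi, rfl⟩
    · rintro ⟨i, hi, rfl⟩
      exact ⟨i, rfl, hi⟩
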